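/- Suppose the bipartite graph H_0 = (L_0, R_0, E_0) has a perfect matching, and let B ⊆ E_0 be such that the bipartite graph (L_0, R_0, E_0 \ B) has no perfect matching. Let G−B denote the gadget graph G with the edges of B deleted. Then EMD_{G−B}(u,v) ≥ (n+4)/(n+3), and hence Ric_{G−B}({u,v}) ≤ −1/(n+3) < 0. -/

import Mathlib

open Finset
open scoped Classical

variable {V : Type*}

/-- The open neighborhood of `u` in `G`, as a finset. -/
noncomputable def nbrF [Fintype V] (G : SimpleGraph V) (u : V) : Finset V :=
  Finset.univ.filter fun x => G.Adj u x

/-- The degree of `u` in `G`. -/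
noncomputable def degG [Fintype V] (G : SimpleGraph V) (u : V) : ℕ := (nbrF G u).card

/-- The closed neighborhood `N[u]` of `u` in `G`. -/
noncomputable def cnbr [Fintype V] (G : SimpleGraph V) (u : V) : Finset V :=
  insert u (nbrF G u)

/-- A transport plan for `(G,u,v)`: nonnegative, with row sums `1/(deg u + 1)` over
`N[u]` and column sums `1/(deg v + 1)` over `N[v]`. -/
def IsPlanG [Fintype V] (G : SimpleGraph V) (u v : V) (z : V → V → ℝ) : Prop :=
  (∀ x y, 0 ≤ z x y) ∧
  (∀ x ∈ cnbr G u, ∑ y ∈ cnbr G v, z x y = 1 / ((degG G u : ℝ) + 1)) ∧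
  (∀ y ∈ cnbr G v, ∑ x ∈ cnbr G u, z x y = 1 / ((degG G v : ℝ) + 1))

/-- The cost of a transport plan, with respect to shortest-path distance in `G`. -/
noncomputable def planCostG [Fintype V] (G : SimpleGraph V) (u v : V) (z : V → V → ℝ) : ℝ :=
  ∑ x ∈ cnbr G u, ∑ y ∈ cnbr G v, (G.dist x y : ℝ) * z x y

/-- The earth mover's distance `EMD_G(u,v)`: the minimum cost of a transport plan. -/
noncomputable def EMDG [Fintype V] (G : SimpleGraph V) (u v : V) : ℝ :=
  sInf {t | ∃ z, IsPlanG G u v z ∧ planCostG G u v z = t}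

/-- The Ollivier–Ricci curvature of the edge `{u,v}`. -/
noncomputable def RicG [Fintype V] (G : SimpleGraph V) (u v : V) : ℝ :=
  1 - EMDG G u v

/-- The five extra vertices `u, v, p, p', x` of the gadget graph. -/
inductive Extra where
  | u | v | p | p' | x
deriving DecidableEq

instance : Fintype Extra where
  elems := {Extra.u, Extra.v, Extra.p, Extra.p', Extra.x}
  complete := by
    intro a
    cases a <;> simp

/-- The vertex set of the gadget graph: `L ⊔ R ⊔ {u,v,p,p',x}`. -/
abbrev GV (L R : Type*) := (L ⊕ R) ⊕ Extra

/-- The base edge relation of the gadget graph built from the bipartite graph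
`H₀ = (L, R, E₀)`: the edge `{u,v}`; `{u,a}` for `a ∈ L`; `{v,b}` for `b ∈ R`;
`{u,p}`; `{v,p'}`; `{p,x}`; `{p',x}`; and `{a,b}` whenever `E₀ a b`. -/
def gadgetRel {L R : Type*} (E0 : L → R → Prop) : GV L R → GV L R → Prop
  | Sum.inr .u, Sum.inr .v => True
  | Sum.inr .u, Sum.inl (Sum.inl _) => True
  | Sum.inr .v, Sum.inl (Sum.inr _) => True
  | Sum.inr .u, Sum.inr .p => True
  | Sum.inr .v, Sum.inr .p' => True
  | Sum.inr .p, Sum.inr .x => True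
  | Sum.inr .p', Sum.inr .x => True
  | Sum.inl (Sum.inl a), Sum.inl (Sum.inr b) => E0 a b
  | _, _ => False

/-- The gadget graph. -/
def gadget {L R : Type*} (E0 : L → R → Prop) : SimpleGraph (GV L R) :=
  SimpleGraph.fromRel (gadgetRel E0)



section Helpers

private lemma dist_ge_two' {V : Type*} {G : SimpleGraph V} {x y : V} (hr : G.Reachable x y)
    (h1 : x ≠ y) (h2 : ¬ G.Adj x y) : 2 ≤ G.dist x y := by
  by_contra h
  push_neg at h
  obtain ⟨p, hp⟩ := hr.exists_walk_length_eq_dist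
  have hl : p.length = 0 ∨ p.length = 1 := by omega
  rcases hl with hl | hl
  · exact h1 (p.eq_of_length_eq_zero hl)
  · have h01 := p.adj_getVert_succ (i := 0) (by omega)
    have e0 := p.getVert_zero
    have eL := p.getVert_length
    rw [hl] at eL
    rw [e0, eL] at h01
    exact h2 h01

private lemma dist_ge_three' {V : Type*} {G : SimpleGraph V} {x y : V} (hr : G.Reachable x y)
    (h1 : x ≠ y) (h2 : ¬ G.Adj x y) (h3 : ∀ w, ¬ (G.Adj x w ∧ G.Adj w y)) :
    3 ≤ G.dist x y := by
  by_contra h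
  push_neg at h
  obtain ⟨p, hp⟩ := hr.exists_walk_length_eq_dist
  have hl : p.length = 0 ∨ p.length = 1 ∨ p.length = 2 := by omega
  have e0 := p.getVert_zero
  have eL := p.getVert_length
  rcases hl with hl | hl | hl
  · exact h1 (p.eq_of_length_eq_zero hl)
  · have h01 := p.adj_getVert_succ (i := 0) (by omega)
    rw [hl] at eL; rw [e0, eL] at h01
    exact h2 h01
  · have h01 := p.adj_getVert_succ (i := 0) (by omega)
    have h12 := p.adj_getVert_succ (i := 1) (by omega)
    rw [hl] at eL; rw [e0] at h01; rw [eL] at h12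
    exact h3 _ ⟨h01, h12⟩

end Helpers

section GadgetFacts

variable {L R : Type*} [Fintype L] [Fintype R] (E : L → R → Prop)

private lemma gadget_nbrF_u :
    nbrF (gadget E) (Sum.inr Extra.u) =
      insert (Sum.inr Extra.v) (insert (Sum.inr Extra.p)
        (Finset.univ.image (fun a : L => (Sum.inl (Sum.inl a) : GV L R)))) := by
  ext w
  rcases w with ((a|b)|e)
  · simp [nbrF, gadget, SimpleGraph.fromRel_adj, gadgetRel]
  · simp [nbrF, gadget, SimpleGraph.fromRel_adj, gadgetRel]
  · cases e <;> simp [nbrF, gadget, SimpleGraph.fromRel_adj, gadgetRel]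

private lemma gadget_nbrF_v :
    nbrF (gadget E) (Sum.inr Extra.v) =
      insert (Sum.inr Extra.u) (insert (Sum.inr Extra.p')
        (Finset.univ.image (fun b : R => (Sum.inl (Sum.inr b) : GV L R)))) := by
  ext w
  rcases w with ((a|b)|e)
  · simp [nbrF, gadget, SimpleGraph.fromRel_adj, gadgetRel]
  · simp [nbrF, gadget, SimpleGraph.fromRel_adj, gadgetRel]
  · cases e <;> simp [nbrF, gadget, SimpleGraph.fromRel_adj, gadgetRel]

private lemma gadget_reach : ∀ w : GV L R, (gadget E).Reachable (Sum.inr Extra.u) w := by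
  have hv : (gadget E).Adj (Sum.inr Extra.u) (Sum.inr Extra.v) := by
    simp [gadget, SimpleGraph.fromRel_adj, gadgetRel]
  have hp : (gadget E).Adj (Sum.inr Extra.u) (Sum.inr Extra.p) := by
    simp [gadget, SimpleGraph.fromRel_adj, gadgetRel]
  intro w
  rcases w with ((a|b)|e)
  · exact SimpleGraph.Adj.reachable (by simp [gadget, SimpleGraph.fromRel_adj, gadgetRel])
  · exact hv.reachable.trans (SimpleGraph.Adj.reachable
      (show (gadget E).Adj (Sum.inr Extra.v) (Sum.inl (Sum.inr b)) by
        simp [gadget, SimpleGraph.fromRel_adj, gadgetRel]))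
  · cases e
    · exact SimpleGraph.Reachable.refl _
    · exact hv.reachable
    · exact hp.reachable
    · exact hv.reachable.trans (SimpleGraph.Adj.reachable
        (show (gadget E).Adj (Sum.inr Extra.v) (Sum.inr Extra.p') by
          simp [gadget, SimpleGraph.fromRel_adj, gadgetRel]))
    · exact hp.reachable.trans (SimpleGraph.Adj.reachable
        (show (gadget E).Adj (Sum.inr Extra.p) (Sum.inr Extra.x) by
          simp [gadget, SimpleGraph.fromRel_adj, gadgetRel]))

end GadgetFacts

/-- Dual potential on the `u`-side. -/
noncomputable def fDual {L R : Type*} (S : Finset L) : GV L R → ℝ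
  | Sum.inl (Sum.inl a) => if a ∈ S then 1 else -1
  | Sum.inl (Sum.inr _) => 0
  | Sum.inr Extra.u => 0
  | Sum.inr Extra.v => -1
  | Sum.inr Extra.p => 1
  | Sum.inr Extra.p' => 0
  | Sum.inr Extra.x => 0

/-- Dual potential on the `v`-side. -/
noncomputable def gDual {L R : Type*} (T : Finset R) : GV L R → ℝ
  | Sum.inl (Sum.inl _) => 0
  | Sum.inl (Sum.inr b) => if b ∈ T then 0 else 2
  | Sum.inr Extra.u => 0
  | Sum.inr Extra.v => 1
  | Sum.inr Extra.p => 0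
  | Sum.inr Extra.p' => 1
  | Sum.inr Extra.x => 0

/-- suppose `H₀ = (L,R,E₀)` (with `|L| = |R| = n ≥ 1`) has a perfect
matching and `B ⊆ E₀` is such that `(L,R,E₀ \ B)` has no perfect matching.  Deleting
the edges of `B` from the gadget graph (i.e. forming the gadget graph of `E₀ \ B`)
gives `EMD(u,v) ≥ (n+4)/(n+3)` and hence `Ric({u,v}) ≤ −1/(n+3) < 0`. -/
theorem stmt15 {L R : Type*} [Fintype L] [Fintype R] (n : ℕ) (hn : 1 ≤ n)
    (hL : Fintype.card L = n) (hR : Fintype.card R = n)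
    (E0 : L → R → Prop) (hpm : ∃ f : L ≃ R, ∀ a : L, E0 a (f a))
    (B : L → R → Prop) (hB : ∀ a b, B a b → E0 a b)
    (hblock : ¬ ∃ f : L ≃ R, ∀ a : L, E0 a (f a) ∧ ¬ B a (f a)) :
    ((n : ℝ) + 4) / ((n : ℝ) + 3) ≤
        EMDG (gadget (fun a b => E0 a b ∧ ¬ B a b)) (Sum.inr Extra.u) (Sum.inr Extra.v) ∧
    RicG (gadget (fun a b => E0 a b ∧ ¬ B a b)) (Sum.inr Extra.u) (Sum.inr Extra.v) ≤
        -1 / ((n : ℝ) + 3) ∧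
    RicG (gadget (fun a b => E0 a b ∧ ¬ B a b)) (Sum.inr Extra.u) (Sum.inr Extra.v) < 0 := by

  set E : L → R → Prop := fun a b => E0 a b ∧ ¬ B a b with hE
  -- Hall's theorem gives a violating set S
  have hHall : ¬ ∀ s : Finset L,
      s.card ≤ (s.biUnion (fun a => Finset.univ.filter (fun b => E a b))).card := by
    intro h
    obtain ⟨f, hfinj, hf⟩ := (Finset.all_card_le_biUnion_card_iff_exists_injective
      (fun a => Finset.univ.filter (fun b => E a b))).mp h
    have hbij : Function.Bijective f :=
      (Fintype.bijective_iff_injective_and_card f).mpr ⟨hfinj, by rw [hL, hR]⟩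
    refine hblock ⟨Equiv.ofBijective f hbij, fun a => ?_⟩
    have h2 := hf a
    simp only [Finset.mem_filter, Finset.mem_univ, true_and] at h2
    rw [hE] at h2
    exact h2
  push_neg at hHall
  obtain ⟨S, hScard⟩ := hHall
  set T : Finset R := S.biUnion (fun a => Finset.univ.filter (fun b => E a b)) with hT
  have hST : (T.card : ℝ) + 1 ≤ (S.card : ℝ) := by exact_mod_cast hScard
  have hmemT : ∀ a ∈ S, ∀ b, E a b → b ∈ T := by
    intro a ha b hb
    exact Finset.mem_biUnion.mpr ⟨a, ha, by simp only [Finset.mem_filter, Finset.mem_univ, true_and]; exact hb⟩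
  -- neighborhood computations
  have hinjL : Function.Injective (fun a : L => (Sum.inl (Sum.inl a) : GV L R)) := by
    intro a a' h; simpa using h
  have hinjR : Function.Injective (fun b : R => (Sum.inl (Sum.inr b) : GV L R)) := by
    intro b b' h; simpa using h
  have hcu : cnbr (gadget E) (Sum.inr Extra.u) =
      insert (Sum.inr Extra.u) (insert (Sum.inr Extra.v) (insert (Sum.inr Extra.p)
        (Finset.univ.image (fun a : L => (Sum.inl (Sum.inl a) : GV L R))))) := by
    rw [cnbr, gadget_nbrF_u]
    ext w
    simp
  have hcv : cnbr (gadget E) (Sum.inr Extra.v) =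
      insert (Sum.inr Extra.v) (insert (Sum.inr Extra.u) (insert (Sum.inr Extra.p')
        (Finset.univ.image (fun b : R => (Sum.inl (Sum.inr b) : GV L R))))) := by
    rw [cnbr, gadget_nbrF_v]
    ext w
    simp
  have hdegu : degG (gadget E) (Sum.inr Extra.u) = n + 2 := by
    rw [degG, gadget_nbrF_u, Finset.card_insert_of_notMem (by simp),
      Finset.card_insert_of_notMem (by simp),
      Finset.card_image_of_injective _ hinjL, Finset.card_univ, hL]
  have hdegv : degG (gadget E) (Sum.inr Extra.v) = n + 2 := by
    rw [degG, gadget_nbrF_v, Finset.card_insert_of_notMem (by simp),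
      Finset.card_insert_of_notMem (by simp),
      Finset.card_image_of_injective _ hinjR, Finset.card_univ, hR]
  have hcardU : (cnbr (gadget E) (Sum.inr Extra.u)).card = n + 3 := by
    rw [hcu, Finset.card_insert_of_notMem (by simp), Finset.card_insert_of_notMem (by simp),
      Finset.card_insert_of_notMem (by simp), Finset.card_image_of_injective _ hinjL,
      Finset.card_univ, hL]
  have hcardV : (cnbr (gadget E) (Sum.inr Extra.v)).card = n + 3 := by
    rw [hcv, Finset.card_insert_of_notMem (by simp), Finset.card_insert_of_notMem (by simp),
      Finset.card_insert_of_notMem (by simp), Finset.card_image_of_injective _ hinjR,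
      Finset.card_univ, hR]
  -- distance estimates
  have hreach : ∀ x y : GV L R, (gadget E).Reachable x y :=
    fun x y => (gadget_reach E x).symm.trans (gadget_reach E y)
  have hd0 : ∀ x y : GV L R, (0:ℝ) ≤ ((gadget E).dist x y : ℝ) := fun x y => Nat.cast_nonneg _
  have hd1 : ∀ x y : GV L R, x ≠ y → (1:ℝ) ≤ ((gadget E).dist x y : ℝ) := by
    intro x y h
    exact_mod_cast (hreach x y).pos_dist_of_ne h
  have hd2 : ∀ x y : GV L R, x ≠ y → ¬ (gadget E).Adj x y →
      (2:ℝ) ≤ ((gadget E).dist x y : ℝ) := by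
    intro x y h h2; exact_mod_cast dist_ge_two' (hreach x y) h h2
  have hd3 : ∀ x y : GV L R, x ≠ y → ¬ (gadget E).Adj x y →
      (∀ w, ¬ ((gadget E).Adj x w ∧ (gadget E).Adj w y)) →
      (3:ℝ) ≤ ((gadget E).dist x y : ℝ) := by
    intro x y h h2 h3; exact_mod_cast dist_ge_three' (hreach x y) h h2 h3
  -- dual feasibility
  have feas : ∀ x ∈ cnbr (gadget E) (Sum.inr Extra.u), ∀ y ∈ cnbr (gadget E) (Sum.inr Extra.v),
      fDual S x + gDual T y ≤ ((gadget E).dist x y : ℝ) := by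
    intro x hx y hy
    rw [hcu] at hx
    rw [hcv] at hy
    simp only [Finset.mem_insert, Finset.mem_image, Finset.mem_univ, true_and] at hx hy
    obtain rfl | rfl | rfl | ⟨a, rfl⟩ := hx
    · -- x = u
      obtain rfl | rfl | rfl | ⟨b, rfl⟩ := hy
      · have h1 := hd1 (Sum.inr Extra.u) (Sum.inr Extra.v) (by simp)
        simp only [fDual, gDual]; linarith
      · have h := hd0 (Sum.inr Extra.u) (Sum.inr Extra.u)
        simp only [fDual, gDual]; linarith
      · have h1 := hd1 (Sum.inr Extra.u) (Sum.inr Extra.p') (by simp)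
        simp only [fDual, gDual]; linarith
      · by_cases hb : b ∈ T
        · have h := hd0 (Sum.inr Extra.u) (Sum.inl (Sum.inr b))
          simp only [fDual, gDual]; rw [if_pos hb]; linarith
        · have h2 := hd2 (Sum.inr Extra.u) (Sum.inl (Sum.inr b)) (by simp)
            (by simp [gadget, SimpleGraph.fromRel_adj, gadgetRel])
          simp only [fDual, gDual]; rw [if_neg hb]; linarith
    · -- x = v
      obtain rfl | rfl | rfl | ⟨b, rfl⟩ := hy
      · have h := hd0 (Sum.inr Extra.v) (Sum.inr Extra.v)
        simp only [fDual, gDual]; linarith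
      · have h := hd0 (Sum.inr Extra.v) (Sum.inr Extra.u)
        simp only [fDual, gDual]; linarith
      · have h := hd0 (Sum.inr Extra.v) (Sum.inr Extra.p')
        simp only [fDual, gDual]; linarith
      · by_cases hb : b ∈ T
        · have h := hd0 (Sum.inr Extra.v) (Sum.inl (Sum.inr b))
          simp only [fDual, gDual]; rw [if_pos hb]; linarith
        · have h1 := hd1 (Sum.inr Extra.v) (Sum.inl (Sum.inr b)) (by simp)
          simp only [fDual, gDual]; rw [if_neg hb]; linarith
    · -- x = p
      obtain rfl | rfl | rfl | ⟨b, rfl⟩ := hy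
      · have h2 := hd2 (Sum.inr Extra.p) (Sum.inr Extra.v) (by simp)
          (by simp [gadget, SimpleGraph.fromRel_adj, gadgetRel])
        simp only [fDual, gDual]; linarith
      · have h1 := hd1 (Sum.inr Extra.p) (Sum.inr Extra.u) (by simp)
        simp only [fDual, gDual]; linarith
      · have h2 := hd2 (Sum.inr Extra.p) (Sum.inr Extra.p') (by simp)
          (by simp [gadget, SimpleGraph.fromRel_adj, gadgetRel])
        simp only [fDual, gDual]; linarith
      · have hcomm : ∀ w, ¬ ((gadget E).Adj (Sum.inr Extra.p) w ∧
            (gadget E).Adj w (Sum.inl (Sum.inr b))) := by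
          rintro ((a'|b')|e') ⟨h1, h2⟩
          · simp [gadget, SimpleGraph.fromRel_adj, gadgetRel] at h1
          · simp [gadget, SimpleGraph.fromRel_adj, gadgetRel] at h1
          · cases e' <;> simp [gadget, SimpleGraph.fromRel_adj, gadgetRel] at h1 h2
        have h3 := hd3 (Sum.inr Extra.p) (Sum.inl (Sum.inr b)) (by simp)
          (by simp [gadget, SimpleGraph.fromRel_adj, gadgetRel]) hcomm
        by_cases hb : b ∈ T
        · simp only [fDual, gDual]; rw [if_pos hb]; linarith
        · simp only [fDual, gDual]; rw [if_neg hb]; linarith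
    · -- x = a ∈ L
      obtain rfl | rfl | rfl | ⟨b, rfl⟩ := hy
      · by_cases ha : a ∈ S
        · have h2 := hd2 (Sum.inl (Sum.inl a)) (Sum.inr Extra.v) (by simp)
            (by simp [gadget, SimpleGraph.fromRel_adj, gadgetRel])
          simp only [fDual, gDual]; rw [if_pos ha]; linarith
        · have h := hd0 (Sum.inl (Sum.inl a)) (Sum.inr Extra.v)
          simp only [fDual, gDual]; rw [if_neg ha]; linarith
      · by_cases ha : a ∈ S
        · have h1 := hd1 (Sum.inl (Sum.inl a)) (Sum.inr Extra.u) (by simp)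
          simp only [fDual, gDual]; rw [if_pos ha]; linarith
        · have h := hd0 (Sum.inl (Sum.inl a)) (Sum.inr Extra.u)
          simp only [fDual, gDual]; rw [if_neg ha]; linarith
      · by_cases ha : a ∈ S
        · have h2 := hd2 (Sum.inl (Sum.inl a)) (Sum.inr Extra.p') (by simp)
            (by simp [gadget, SimpleGraph.fromRel_adj, gadgetRel])
          simp only [fDual, gDual]; rw [if_pos ha]; linarith
        · have h := hd0 (Sum.inl (Sum.inl a)) (Sum.inr Extra.p')
          simp only [fDual, gDual]; rw [if_neg ha]; linarith
      · by_cases ha : a ∈ S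
        · by_cases hb : b ∈ T
          · have h1 := hd1 (Sum.inl (Sum.inl a)) (Sum.inl (Sum.inr b)) (by simp)
            simp only [fDual, gDual]; rw [if_pos ha, if_pos hb]; linarith
          · have hnE : ¬ E a b := fun h => hb (hmemT a ha b h)
            have hcomm : ∀ w, ¬ ((gadget E).Adj (Sum.inl (Sum.inl a)) w ∧
                (gadget E).Adj w (Sum.inl (Sum.inr b))) := by
              rintro ((a'|b')|e') ⟨h1, h2⟩
              · simp [gadget, SimpleGraph.fromRel_adj, gadgetRel] at h1
              · simp [gadget, SimpleGraph.fromRel_adj, gadgetRel] at h2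
              · cases e' <;> simp [gadget, SimpleGraph.fromRel_adj, gadgetRel] at h1 h2
            have h3 := hd3 (Sum.inl (Sum.inl a)) (Sum.inl (Sum.inr b)) (by simp)
              (by simp [gadget, SimpleGraph.fromRel_adj, gadgetRel, hnE]) hcomm
            simp only [fDual, gDual]; rw [if_pos ha, if_neg hb]; linarith
        · by_cases hb : b ∈ T
          · have h := hd0 (Sum.inl (Sum.inl a)) (Sum.inl (Sum.inr b))
            simp only [fDual, gDual]; rw [if_neg ha, if_pos hb]; linarith
          · have h1 := hd1 (Sum.inl (Sum.inl a)) (Sum.inl (Sum.inr b)) (by simp)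
            simp only [fDual, gDual]; rw [if_neg ha, if_neg hb]; linarith
  -- sums of the dual potentials
  have hsumL : ∑ a : L, (if a ∈ S then (1:ℝ) else -1) = 2 * S.card - n := by
    have h1 : ∀ a : L, (if a ∈ S then (1:ℝ) else -1) = (if a ∈ S then (2:ℝ) else 0) - 1 := by
      intro a; by_cases h : a ∈ S <;> simp [h] <;> norm_num
    rw [Finset.sum_congr rfl (fun a _ => h1 a), Finset.sum_sub_distrib, Finset.sum_ite_mem,
      Finset.univ_inter, Finset.sum_const, Finset.sum_const, Finset.card_univ, hL]
    push_cast; ring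
  have hsumR : ∑ b : R, (if b ∈ T then (0:ℝ) else 2) = 2 * n - 2 * T.card := by
    have h1 : ∀ b : R, (if b ∈ T then (0:ℝ) else 2) = 2 - (if b ∈ T then (2:ℝ) else 0) := by
      intro b; by_cases h : b ∈ T <;> simp [h] <;> norm_num
    rw [Finset.sum_congr rfl (fun b _ => h1 b), Finset.sum_sub_distrib, Finset.sum_ite_mem,
      Finset.univ_inter, Finset.sum_const, Finset.sum_const, Finset.card_univ, hR]
    push_cast; ring
  have hsumf : ∑ x ∈ cnbr (gadget E) (Sum.inr Extra.u), fDual S x = 2 * S.card - n := by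
    rw [hcu, Finset.sum_insert (by simp), Finset.sum_insert (by simp), Finset.sum_insert (by simp),
      Finset.sum_image (fun a _ a' _ h => hinjL h)]
    simp only [fDual]
    rw [hsumL]; ring
  have hsumg : ∑ y ∈ cnbr (gadget E) (Sum.inr Extra.v), gDual T y = 2 + 2 * n - 2 * T.card := by
    rw [hcv, Finset.sum_insert (by simp), Finset.sum_insert (by simp), Finset.sum_insert (by simp),
      Finset.sum_image (fun b _ b' _ h => hinjR h)]
    simp only [gDual]
    rw [hsumR]; ring
  have hdeg'u : ((degG (gadget E) (Sum.inr Extra.u) : ℝ) + 1) = (n:ℝ) + 3 := by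
    rw [hdegu]; push_cast; ring
  have hdeg'v : ((degG (gadget E) (Sum.inr Extra.v) : ℝ) + 1) = (n:ℝ) + 3 := by
    rw [hdegv]; push_cast; ring
  have hn3 : (0:ℝ) < (n:ℝ) + 3 := by positivity
  -- every plan costs at least (n+4)/(n+3)
  have planLB : ∀ z, IsPlanG (gadget E) (Sum.inr Extra.u) (Sum.inr Extra.v) z →
      ((n:ℝ)+4)/((n:ℝ)+3) ≤ planCostG (gadget E) (Sum.inr Extra.u) (Sum.inr Extra.v) z := by
    rintro z ⟨hz0, hrow, hcol⟩
    have hrow' : ∀ x ∈ cnbr (gadget E) (Sum.inr Extra.u),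
        ∑ y ∈ cnbr (gadget E) (Sum.inr Extra.v), z x y = 1/((n:ℝ)+3) := by
      intro x hx; rw [hrow x hx, hdeg'u]
    have hcol' : ∀ y ∈ cnbr (gadget E) (Sum.inr Extra.v),
        ∑ x ∈ cnbr (gadget E) (Sum.inr Extra.u), z x y = 1/((n:ℝ)+3) := by
      intro y hy; rw [hcol y hy, hdeg'v]
    have step1 : ∑ x ∈ cnbr (gadget E) (Sum.inr Extra.u),
        ∑ y ∈ cnbr (gadget E) (Sum.inr Extra.v), (fDual S x + gDual T y) * z x y
        ≤ planCostG (gadget E) (Sum.inr Extra.u) (Sum.inr Extra.v) z := by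
      unfold planCostG
      apply Finset.sum_le_sum
      intro x hx
      apply Finset.sum_le_sum
      intro y hy
      exact mul_le_mul_of_nonneg_right (feas x hx y hy) (hz0 x y)
    have e1 : ∑ x ∈ cnbr (gadget E) (Sum.inr Extra.u),
        ∑ y ∈ cnbr (gadget E) (Sum.inr Extra.v), fDual S x * z x y
        = (2 * S.card - n) * (1/((n:ℝ)+3)) := by
      rw [← hsumf, Finset.sum_mul]
      apply Finset.sum_congr rfl
      intro x hx
      rw [← Finset.mul_sum, hrow' x hx]
    have e2 : ∑ x ∈ cnbr (gadget E) (Sum.inr Extra.u),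
        ∑ y ∈ cnbr (gadget E) (Sum.inr Extra.v), gDual T y * z x y
        = (2 + 2 * (n:ℝ) - 2 * T.card) * (1/((n:ℝ)+3)) := by
      rw [Finset.sum_comm, ← hsumg, Finset.sum_mul]
      apply Finset.sum_congr rfl
      intro y hy
      rw [← Finset.mul_sum, hcol' y hy]
    have step2 : ∑ x ∈ cnbr (gadget E) (Sum.inr Extra.u),
        ∑ y ∈ cnbr (gadget E) (Sum.inr Extra.v), (fDual S x + gDual T y) * z x y
        = (2 * S.card - n) * (1/((n:ℝ)+3)) + (2 + 2 * (n:ℝ) - 2 * T.card) * (1/((n:ℝ)+3)) := by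
      simp_rw [add_mul, Finset.sum_add_distrib]
      rw [e1, e2]
    rw [step2] at step1
    have hfinal : ((n:ℝ)+4)/((n:ℝ)+3) ≤
        (2 * S.card - n) * (1/((n:ℝ)+3)) + (2 + 2 * (n:ℝ) - 2 * T.card) * (1/((n:ℝ)+3)) := by
      rw [div_eq_mul_one_div, ← add_mul]
      apply mul_le_mul_of_nonneg_right _ (by positivity)
      linarith [hST]
    linarith
  -- a plan exists
  have hplan0 : IsPlanG (gadget E) (Sum.inr Extra.u) (Sum.inr Extra.v)
      (fun _ _ => (((n:ℝ)+3) * ((n:ℝ)+3))⁻¹) := by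
    have hne : ((n:ℝ)+3) ≠ 0 := ne_of_gt hn3
    refine ⟨fun x y => by positivity, ?_, ?_⟩
    · intro x hx
      rw [Finset.sum_const, hcardV, hdeg'u]
      rw [nsmul_eq_mul]
      push_cast
      field_simp
    · intro y hy
      rw [Finset.sum_const, hcardU, hdeg'v]
      rw [nsmul_eq_mul]
      push_cast
      field_simp
  have hEMD : ((n:ℝ)+4)/((n:ℝ)+3) ≤
      EMDG (gadget E) (Sum.inr Extra.u) (Sum.inr Extra.v) := by
    apply le_csInf
    · exact ⟨_, ⟨_, hplan0, rfl⟩⟩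
    · rintro t ⟨z, hz, rfl⟩
      exact planLB z hz
  have hRiceq : (1:ℝ) - ((n:ℝ)+4)/((n:ℝ)+3) = -1/((n:ℝ)+3) := by
    field_simp
    norm_num
  have hRic : RicG (gadget E) (Sum.inr Extra.u) (Sum.inr Extra.v) ≤ -1/((n:ℝ)+3) := by
    unfold RicG
    linarith
  have hneg : (-1:ℝ)/((n:ℝ)+3) < 0 := by
    apply div_neg_of_neg_of_pos _ hn3
    norm_num
  exact ⟨hEMD, hRic, lt_of_le_of_lt hRic hneg⟩
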